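/- Let N ≥ 3 be odd and let B be the closed unit ball in ℝᴺ. Then there exists a nonzero real polynomial p in N+2 variables such that for all a ∈ ℝᴺ with a ≠ 0 and all b ∈ ℝ: p(V(a,b), a₁, …, a_N, b) = 0, where V(a,b) is the Lebesgue volume of B ∩ {x : ⟨a, x⟩ ≤ b}. That is, the unit ball in odd-dimensional Euclidean space is algebraically integrable. -/

import Mathlib

open MeasureTheory Set Metric
open scoped RealInnerProductSpace ENNReal

noncomputable def ballVol (n : ℕ) : ℝ≥0∞ :=
  volume (closedBall (0 : EuclideanSpace ℝ (Fin n)) 1)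

lemma euclid_mem_ball_iff {n : ℕ} (x : EuclideanSpace ℝ (Fin n)) (r : ℝ) (hr : 0 ≤ r) :
    ‖x‖ ≤ r ↔ ∑ i, x i ^ 2 ≤ r ^ 2 := by
  have h2 : ‖x‖ ^ 2 = ∑ i, x i ^ 2 := by
    simpa [Real.norm_eq_abs, sq_abs] using PiLp.norm_sq_eq_of_L2 (fun _ : Fin n => ℝ) x
  rw [← h2]
  constructor
  · intro h; nlinarith [norm_nonneg x]
  · intro h; nlinarith [norm_nonneg x]

lemma slice_volume (n m : ℕ) (hnm : n = 2 * m) (t : ℝ) (ht1 : (-1:ℝ) ≤ t) (ht2 : t ≤ 1) :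
    volume (closedBall (0 : EuclideanSpace ℝ (Fin (n+1))) 1 ∩ {x | x 0 ≤ t})
      = ballVol n * ENNReal.ofReal (∫ s in (-1:ℝ)..t, (1 - s^2)^m) := by
  -- Step 1: move to `Fin (n+1) → ℝ`
  set A : Set (Fin (n+1) → ℝ) := {f | ∑ i, f i ^ 2 ≤ 1 ∧ f 0 ≤ t} with hA
  have hAmeas : MeasurableSet A := by
    apply MeasurableSet.inter
    · exact measurableSet_le (Finset.measurable_sum _ fun i _ =>
        (measurable_pi_apply i).pow_const 2) measurable_const
    · exact measurableSet_le (measurable_pi_apply 0) measurable_const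
  have hset : closedBall (0 : EuclideanSpace ℝ (Fin (n+1))) 1 ∩ {x | x 0 ≤ t}
      = (MeasurableEquiv.toLp 2 (Fin (n+1) → ℝ)).symm ⁻¹' A := by
    ext x
    simp only [mem_inter_iff, mem_closedBall, dist_zero_right, mem_setOf_eq, mem_preimage, hA,
      MeasurableEquiv.toLp_symm_apply, MeasurableEquiv.coe_toLp_symm]
    rw [euclid_mem_ball_iff x 1 zero_le_one, one_pow]
  rw [hset, (EuclideanSpace.volume_preserving_symm_measurableEquiv_toLp (Fin (n+1))).measure_preimage
    hAmeas.nullMeasurableSet]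
  -- Step 2: split off the first coordinate
  set A' : Set (ℝ × (Fin n → ℝ)) := {p | p.1 ^ 2 + ∑ i, p.2 i ^ 2 ≤ 1 ∧ p.1 ≤ t} with hA'
  have hA'meas : MeasurableSet A' := by
    apply MeasurableSet.inter
    · exact measurableSet_le ((measurable_fst.pow_const 2).add
        (Finset.measurable_sum _ fun i _ =>
          ((measurable_pi_apply i).comp measurable_snd).pow_const 2)) measurable_const
    · exact measurableSet_le measurable_fst measurable_const
  have hset2 : A = (MeasurableEquiv.piFinSuccAbove (fun _ : Fin (n+1) => ℝ) 0) ⁻¹' A' := by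
    ext f
    simp only [hA, hA', mem_setOf_eq, mem_preimage, MeasurableEquiv.piFinSuccAbove_apply]
    rw [Fin.sum_univ_succAbove (fun i => f i ^ 2) 0]
    exact Iff.rfl
  rw [hset2, (volume_preserving_piFinSuccAbove (fun _ : Fin (n+1) => ℝ) 0).measure_preimage
    hA'meas.nullMeasurableSet]
  -- Step 3: Fubini
  rw [show (volume : Measure (ℝ × (Fin n → ℝ))) = (volume : Measure ℝ).prod volume from rfl,
    Measure.prod_apply hA'meas]
  -- Step 4: compute the slices
  have key : ∀ s : ℝ, volume (Prod.mk s ⁻¹' A')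
      = (Icc (-1:ℝ) t).indicator
          (fun s => ENNReal.ofReal ((1 - s^2)^m) * ballVol n) s := by
    intro s
    by_cases hs : s ∈ Icc (-1:ℝ) t
    · obtain ⟨hs1, hs2⟩ := hs
      have hr : (0:ℝ) ≤ 1 - s^2 := by nlinarith
      have hpre : Prod.mk s ⁻¹' A'
          = (MeasurableEquiv.toLp 2 (Fin n → ℝ)).symm.symm ⁻¹'
              (closedBall 0 (Real.sqrt (1 - s^2))) := by
        ext y
        simp only [hA', mem_preimage, mem_setOf_eq, mem_closedBall, dist_zero_right]
        rw [euclid_mem_ball_iff _ _ (Real.sqrt_nonneg _), Real.sq_sqrt hr]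
        have : ∀ i, ((MeasurableEquiv.toLp 2 (Fin n → ℝ)).symm.symm y) i = y i := fun i => rfl
        simp only [this]
        constructor
        · rintro ⟨h1, _⟩; linarith
        · intro h1; exact ⟨by linarith, hs2⟩
      rw [hpre, ((EuclideanSpace.volume_preserving_symm_measurableEquiv_toLp (Fin n)).symm _).measure_preimage
        measurableSet_closedBall.nullMeasurableSet,
        Measure.addHaar_closedBall' volume 0 (Real.sqrt_nonneg _),
        indicator_of_mem (mem_Icc.mpr ⟨hs1, hs2⟩)]
      have : (Real.sqrt (1 - s^2)) ^ Module.finrank ℝ (EuclideanSpace ℝ (Fin n)) = (1 - s^2)^m := by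
        rw [finrank_euclideanSpace_fin, hnm, pow_mul, Real.sq_sqrt hr]
      rw [this]
      rfl
    · rw [indicator_of_notMem hs]
      convert measure_empty
      · ext y
        simp only [hA', mem_preimage, mem_setOf_eq, mem_empty_iff_false, iff_false, not_and]
        intro h1
        rw [mem_Icc, not_and_or] at hs
        rcases hs with hs | hs
        · exfalso
          push_neg at hs
          have : (0:ℝ) ≤ ∑ i, y i ^ 2 := Finset.sum_nonneg fun i _ => sq_nonneg _
          nlinarith
        · push_neg at hs; intro h2; linarith
      · infer_instance
  simp_rw [key]
  -- Step 5: integrate the indicator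
  rw [lintegral_indicator measurableSet_Icc, lintegral_mul_const (ballVol n) (by fun_prop : Measurable fun s : ℝ => ENNReal.ofReal ((1 - s^2)^m))]
  -- Step 6: convert to a Bochner integral
  have hint : IntegrableOn (fun s : ℝ => (1 - s^2)^m) (Icc (-1) t) volume :=
    (Continuous.integrableOn_Icc (by continuity))
  have hnonneg : 0 ≤ᵐ[volume.restrict (Icc (-1:ℝ) t)] fun s => (1 - s^2)^m := by
    filter_upwards [ae_restrict_mem measurableSet_Icc] with s hs
    have : (0:ℝ) ≤ 1 - s^2 := by
      obtain ⟨h1, h2⟩ := hs; nlinarith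
    positivity
  rw [← ofReal_integral_eq_lintegral_ofReal hint hnonneg, mul_comm]
  congr 1
  rw [MeasureTheory.integral_Icc_eq_integral_Ioc, ← intervalIntegral.integral_of_le ht1]

lemma integral_one_sub_sq_pow (m : ℕ) (t : ℝ) :
    ∫ s in (-1:ℝ)..t, (1 - s^2)^m
      = ∑ k ∈ Finset.range (m+1),
          ((-1:ℝ)^k * (m.choose k)) * ((t^(2*k+1) + 1)/(2*k+1)) := by
  have hexp : ∀ s : ℝ, (1 - s^2)^m
      = ∑ k ∈ Finset.range (m+1), ((-1:ℝ)^k * (m.choose k)) * s^(2*k) := by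
    intro s
    rw [show (1 - s^2 : ℝ) = (-(s^2)) + 1 by ring, add_pow]
    refine Finset.sum_congr rfl fun k hk => ?_
    rw [one_pow, neg_pow, pow_mul]
    ring
  rw [intervalIntegral.integral_congr (fun s _ => hexp s)]
  rw [intervalIntegral.integral_finset_sum
    (fun k _ => (Continuous.intervalIntegrable (by continuity) _ _))]
  refine Finset.sum_congr rfl fun k hk => ?_
  rw [intervalIntegral.integral_const_mul, integral_pow]
  have h1 : ((-1:ℝ))^(2*k+1) = -1 := by
    rw [pow_succ, pow_mul]; norm_num
  rw [h1]
  push_cast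
  ring

lemma cap_volume_rotate (n : ℕ) (a : EuclideanSpace ℝ (Fin (n+1))) (ha : a ≠ 0) (b : ℝ) :
    volume (closedBall (0 : EuclideanSpace ℝ (Fin (n+1))) 1 ∩ {x | ⟪a, x⟫ ≤ b})
      = volume (closedBall (0 : EuclideanSpace ℝ (Fin (n+1))) 1 ∩ {x | x 0 ≤ b / ‖a‖}) := by
  have hna : 0 < ‖a‖ := norm_pos_iff.mpr ha
  set u : EuclideanSpace ℝ (Fin (n+1)) := ‖a‖⁻¹ • a with hu
  have hu1 : ‖u‖ = 1 := by
    rw [hu, norm_smul, norm_inv, norm_norm, inv_mul_cancel₀ hna.ne']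
  set e : EuclideanSpace ℝ (Fin (n+1)) := EuclideanSpace.single 0 1 with he
  have he1 : ‖e‖ = ‖u‖ := by
    rw [hu1, he, EuclideanSpace.norm_single]; norm_num
  set R := Submodule.reflection (ℝ ∙ (e - u))ᗮ with hR
  have hRe : R e = u := Submodule.reflection_sub he1
  have hhalf : {x : EuclideanSpace ℝ (Fin (n+1)) | ⟪a, x⟫ ≤ b}
      = {x | ⟪u, x⟫ ≤ b / ‖a‖} := by
    ext x
    simp only [mem_setOf_eq, hu, real_inner_smul_left]
    rw [inv_mul_eq_div, div_le_div_iff_of_pos_right hna]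
  rw [hhalf]
  have hmeas : MeasurableSet (closedBall (0 : EuclideanSpace ℝ (Fin (n+1))) 1
      ∩ {x | ⟪u, x⟫ ≤ b / ‖a‖}) := by
    refine measurableSet_closedBall.inter ?_
    exact (isClosed_le (Continuous.inner continuous_const continuous_id) continuous_const).measurableSet
  have hpre : R ⁻¹' (closedBall 0 1 ∩ {x | ⟪u, x⟫ ≤ b / ‖a‖})
      = closedBall 0 1 ∩ {x | x 0 ≤ b / ‖a‖} := by
    ext x
    simp only [mem_preimage, mem_inter_iff, mem_closedBall, dist_zero_right, mem_setOf_eq]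
    rw [R.norm_map]
    have : ⟪u, R x⟫ = x 0 := by
      rw [← hRe, R.inner_map_map, he, EuclideanSpace.inner_single_left]
      simp
    rw [this]
  rw [← R.measurePreserving.measure_preimage hmeas.nullMeasurableSet, hpre]

lemma cap_formula (n m : ℕ) (hnm : n = 2*m) (a : EuclideanSpace ℝ (Fin (n+1))) (ha : a ≠ 0)
    (b : ℝ) (hb : |b| ≤ ‖a‖) :
    (volume (closedBall (0 : EuclideanSpace ℝ (Fin (n+1))) 1 ∩ {x | ⟪a, x⟫ ≤ b})).toReal
      = ∑ k ∈ Finset.range (m+1),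
          ((ballVol n).toReal * ((-1:ℝ)^k * (m.choose k)) / (2*k+1)) * ((b/‖a‖)^(2*k+1) + 1) := by
  have hna : 0 < ‖a‖ := norm_pos_iff.mpr ha
  have habs : |b / ‖a‖| ≤ 1 := by
    rw [abs_div, abs_of_pos hna, div_le_one hna]; exact hb
  rw [abs_le] at habs
  have hint : (0:ℝ) ≤ ∫ s in (-1:ℝ)..(b/‖a‖), (1 - s^2)^m := by
    apply intervalIntegral.integral_nonneg habs.1
    intro s hs
    obtain ⟨h1, h2⟩ := hs
    have : (0:ℝ) ≤ 1 - s^2 := by nlinarith [habs.2]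
    positivity
  rw [cap_volume_rotate n a ha b, slice_volume n m hnm _ habs.1 habs.2,
    ENNReal.toReal_mul, ENNReal.toReal_ofReal hint, integral_one_sub_sq_pow,
    Finset.mul_sum]
  exact Finset.sum_congr rfl fun k _ => by ring

/-- Let `N ≥ 3` be odd and `B` the closed unit ball in `ℝᴺ`.  There is
a nonzero real polynomial `p` in `N+2` variables such that for all `a ∈ ℝᴺ \ {0}` and all
`b ∈ ℝ`: `p(V(a,b), a₁, …, a_N, b) = 0`, where `V(a,b)` is the volume of
`B ∩ {x : ⟨a,x⟩ ≤ b}`; i.e. the unit ball in odd-dimensional space is algebraically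
integrable. -/
theorem unit_ball_algebraically_integrable (N : ℕ) (hN : 3 ≤ N) (hNodd : Odd N) :
    ∃ p : MvPolynomial (Unit ⊕ Fin N ⊕ Unit) ℝ, p ≠ 0 ∧
      ∀ (a : EuclideanSpace ℝ (Fin N)) (b : ℝ), a ≠ 0 →
        MvPolynomial.eval
          (Sum.elim
            (fun _ => (volume (Metric.closedBall (0 : EuclideanSpace ℝ (Fin N)) 1 ∩
              {x : EuclideanSpace ℝ (Fin N) | ⟪a, x⟫ ≤ b})).toReal)
            (Sum.elim (fun i => a i) (fun _ => b))) p = 0 := by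
  obtain ⟨m, rfl⟩ := hNodd
  set N := 2 * m + 1 with hNdef
  -- the coefficients of the cap polynomial
  set ι : ℝ := (ballVol (2*m)).toReal with hι
  set ek : ℕ → ℝ := fun k => ι * ((-1:ℝ)^k * (m.choose k)) / (2*k+1) with hek
  set C0 : ℝ := ∑ k ∈ Finset.range (m+1), ek k with hC0
  set VOL : ℝ := (volume (closedBall (0 : EuclideanSpace ℝ (Fin N)) 1)).toReal with hVOL
  -- the polynomial
  set V : MvPolynomial (Unit ⊕ Fin N ⊕ Unit) ℝ := MvPolynomial.X (Sum.inl ()) with hV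
  set Xb : MvPolynomial (Unit ⊕ Fin N ⊕ Unit) ℝ := MvPolynomial.X (Sum.inr (Sum.inr ())) with hXb
  set S : MvPolynomial (Unit ⊕ Fin N ⊕ Unit) ℝ :=
    ∑ i : Fin N, (MvPolynomial.X (Sum.inr (Sum.inl i)))^2 with hS
  set T : MvPolynomial (Unit ⊕ Fin N ⊕ Unit) ℝ :=
    ∑ k ∈ Finset.range (m+1), MvPolynomial.C (ek k) * Xb^(2*k+1) * S^(m-k) with hT
  refine ⟨V * (V - MvPolynomial.C VOL) *
    ((V - MvPolynomial.C C0)^2 * S^N - T^2), ?_, ?_⟩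
  · -- nonzero
    intro h
    set v0 : ℝ := |VOL| + |C0| + 1 with hv0
    have := congrArg (MvPolynomial.eval
      (Sum.elim (fun _ : Unit => v0)
        (Sum.elim (fun i : Fin N => if i = 0 then (1:ℝ) else 0) (fun _ : Unit => 0)))) h
    rw [map_zero] at this
    simp only [hV, hXb, hS, hT, map_mul, map_sub, map_pow, map_sum, MvPolynomial.eval_X,
      MvPolynomial.eval_C, Sum.elim_inl, Sum.elim_inr] at this
    have hsum1 : (∑ x : Fin N, ((if x = (0:Fin N) then (1:ℝ) else 0))^2) = 1 := by
      simp [sq, ite_mul, Finset.sum_ite_eq']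
    rw [hsum1] at this
    simp only [one_pow, pow_succ, pow_zero, one_mul, sub_zero, mul_zero, zero_mul, mul_one, Finset.sum_const_zero] at this
    have h1 : (0:ℝ) < v0 := by positivity
    have h2 : (0:ℝ) < v0 - VOL := by
      have := le_abs_self VOL; have := abs_nonneg C0; simp only [hv0]; linarith
    have h3 : (0:ℝ) < v0 - C0 := by
      have := le_abs_self C0; have := abs_nonneg VOL; simp only [hv0]; linarith
    nlinarith [this, mul_pos h1 (mul_pos h2 (mul_pos h3 h3))]
  · -- vanishing
    intro a b ha
    set v : ℝ := (volume (closedBall (0 : EuclideanSpace ℝ (Fin N)) 1 ∩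
      {x : EuclideanSpace ℝ (Fin N) | ⟪a, x⟫ ≤ b})).toReal with hv
    set r : ℝ := ‖a‖ with hr
    have hrpos : 0 < r := norm_pos_iff.mpr ha
    set s : ℝ := ∑ i, a i ^ 2 with hs
    have hsr : s = r^2 := by
      rw [hs, hr]
      simpa [Real.norm_eq_abs, sq_abs] using
        (PiLp.norm_sq_eq_of_L2 (fun _ : Fin N => ℝ) a).symm
    simp only [hV, hXb, hS, hT, map_mul, map_sub, map_pow, map_sum, MvPolynomial.eval_X,
      MvPolynomial.eval_C, Sum.elim_inl, Sum.elim_inr, ← hv, ← hs]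
    rcases le_or_gt b r with hb2 | hb2
    · rcases le_or_gt (-r) b with hb1 | hb1
      · -- middle case
        have hcap : v = ∑ k ∈ Finset.range (m+1), ek k * ((b/r)^(2*k+1) + 1) := by
          rw [hv]
          exact cap_formula (2*m) m rfl a ha b (abs_le.mpr ⟨by linarith, hb2⟩)
        have hsum : v - C0 = ∑ k ∈ Finset.range (m+1), ek k * (b/r)^(2*k+1) := by
          rw [hcap, hC0, ← Finset.sum_sub_distrib]
          exact Finset.sum_congr rfl fun k _ => by ring
        have hkey : (v - C0) * r^N = ∑ k ∈ Finset.range (m+1), ek k * b^(2*k+1) * s^(m-k) := by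
          rw [hsum, Finset.sum_mul]
          refine Finset.sum_congr rfl fun k hk => ?_
          have hkm : k ≤ m := Nat.lt_succ_iff.mp (Finset.mem_range.mp hk)
          have hpow : r^(N:ℕ) = r^(2*k+1) * (r^2)^(m-k) := by
            rw [← pow_mul, ← pow_add]
            congr 1
            omega
          rw [hpow, div_pow, hsr]
          field_simp
        have hfac : (v - C0)^2 * s^(N:ℕ)
            = (∑ k ∈ Finset.range (m+1), ek k * b^(2*k+1) * s^(m-k))^2 := by
          rw [← hkey, mul_pow, ← pow_mul, hsr, ← pow_mul]
          ring_nf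
        rw [hfac]
        ring
      · -- b < -r : empty intersection
        have hempty : closedBall (0 : EuclideanSpace ℝ (Fin N)) 1 ∩
            {x : EuclideanSpace ℝ (Fin N) | ⟪a, x⟫ ≤ b} = ∅ := by
          ext x
          simp only [mem_inter_iff, mem_closedBall, dist_zero_right, mem_setOf_eq,
            mem_empty_iff_false, iff_false, not_and]
          intro hx hbx
          have h1 : |⟪a, x⟫| ≤ ‖a‖ * ‖x‖ := abs_real_inner_le_norm a x
          have h2 : ‖a‖ * ‖x‖ ≤ r := by
            rw [← hr]; nlinarith [norm_nonneg x]
          have := neg_abs_le ⟪a, x⟫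
          linarith
        have hv0 : v = 0 := by rw [hv, hempty]; simp
        rw [hv0]
        ring
    · -- r < b : full ball
      have hfull : closedBall (0 : EuclideanSpace ℝ (Fin N)) 1 ∩
          {x : EuclideanSpace ℝ (Fin N) | ⟪a, x⟫ ≤ b} =
          closedBall (0 : EuclideanSpace ℝ (Fin N)) 1 := by
        apply inter_eq_left.mpr
        intro x hx
        simp only [mem_closedBall, dist_zero_right] at hx
        simp only [mem_setOf_eq]
        have h1 : ⟪a, x⟫ ≤ ‖a‖ * ‖x‖ := real_inner_le_norm a x
        have h2 : ‖a‖ * ‖x‖ ≤ r := by rw [← hr]; nlinarith [norm_nonneg x]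
        linarith
      have hvV : v = VOL := by rw [hv, hfull, hVOL]
      rw [hvV]
      ring
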